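/- For every integer m ≥ 2 and every even integer r ≥ 2, the binomial identity C(r+m−2, m−2) + C(r−1+m−2, m−2) = Σ_{l=0}^{r/2} C(m, 2l) · C(r/2 − l + m − 2, m−2) holds, where C(n,k) denotes the binomial coefficient. -/

import Mathlib

open PowerSeries Finset

noncomputable section ChooseAux

/-- The substitution `X ↦ X^2` on integer power series, defined coefficientwise. -/
def stretch (f : PowerSeries ℤ) : PowerSeries ℤ :=
  PowerSeries.mk fun n => if Even n then PowerSeries.coeff (R := ℤ) (n / 2) f else 0

lemma coeff_stretch (f : PowerSeries ℤ) (n : ℕ) :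
    PowerSeries.coeff (R := ℤ) n (stretch f) =
      if Even n then PowerSeries.coeff (R := ℤ) (n / 2) f else 0 :=
  PowerSeries.coeff_mk _ _

/-- Summing a function vanishing on odd numbers over `range (2k+1)` is summing over evens. -/
lemma sum_range_even (k : ℕ) (g : ℕ → ℤ)
    (h : ∀ j, j < 2 * k + 1 → Odd j → g j = 0) :
    ∑ j ∈ Finset.range (2 * k + 1), g j = ∑ l ∈ Finset.range (k + 1), g (2 * l) := by
  induction k with
  | zero => simp
  | succ k ih =>
    have h2 : 2 * (k + 1) + 1 = (2 * k + 1) + 1 + 1 := by ring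
    rw [h2, Finset.sum_range_succ, Finset.sum_range_succ,
      ih (fun j hj hodd => h j (by omega) hodd), h (2 * k + 1) (by omega) ⟨k, by ring⟩,
      Finset.sum_range_succ (n := k + 1)]
    have h3 : 2 * k + 1 + 1 = 2 * (k + 1) := by ring
    rw [h3]
    ring

lemma stretch_mul (f g : PowerSeries ℤ) :
    stretch (f * g) = stretch f * stretch g := by
  ext n
  rw [PowerSeries.coeff_mul, Finset.Nat.sum_antidiagonal_eq_sum_range_succ_mk, coeff_stretch]
  dsimp only
  rcases Nat.even_or_odd n with he | ho
  · obtain ⟨k, hk⟩ := he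
    subst hk
    have hk2 : k + k = 2 * k := by ring
    rw [hk2, if_pos ⟨k, by ring⟩]
    rw [sum_range_even k _ (by
      intro j hj hodd
      rw [coeff_stretch, if_neg (Nat.not_even_iff_odd.mpr hodd), zero_mul])]
    rw [show (2 * k) / 2 = k by omega, PowerSeries.coeff_mul,
      Finset.Nat.sum_antidiagonal_eq_sum_range_succ_mk]
    dsimp only
    apply Finset.sum_congr rfl
    intro l hl
    have hl' : l ≤ k := by simpa [Nat.lt_succ_iff] using hl
    have hev1 : Even (2 * l) := ⟨l, by ring⟩
    have hev2 : Even (2 * k - 2 * l) := ⟨k - l, by omega⟩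
    rw [coeff_stretch, coeff_stretch, if_pos hev1, if_pos hev2,
      show 2 * l / 2 = l by omega, show (2 * k - 2 * l) / 2 = k - l by omega]
  · rw [if_neg (Nat.not_even_iff_odd.mpr ho)]
    refine (Finset.sum_eq_zero ?_).symm
    intro j hj
    have hj' : j ≤ n := by simpa [Nat.lt_succ_iff] using hj
    rcases Nat.even_or_odd j with hje | hjo
    · have hodd : Odd (n - j) := Nat.Odd.sub_even hj' ho hje
      rw [coeff_stretch (f := g), if_neg (Nat.not_even_iff_odd.mpr hodd), mul_zero]
    · rw [coeff_stretch (f := f), if_neg (Nat.not_even_iff_odd.mpr hjo), zero_mul]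

lemma stretch_one : stretch 1 = 1 := by
  ext n
  rw [coeff_stretch, PowerSeries.coeff_one, PowerSeries.coeff_one]
  simp only [Nat.even_iff]
  split_ifs <;> omega

lemma stretch_one_sub_X : stretch (1 - X) = 1 - X ^ 2 := by
  ext n
  rw [coeff_stretch, map_sub, map_sub, PowerSeries.coeff_one, PowerSeries.coeff_one,
    PowerSeries.coeff_X, PowerSeries.coeff_X_pow]
  simp only [Nat.even_iff]
  split_ifs <;> omega

lemma stretch_pow (f : PowerSeries ℤ) (n : ℕ) : stretch (f ^ n) = (stretch f) ^ n := by
  induction n with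
  | zero => simpa using stretch_one
  | succ n ih => rw [pow_succ, pow_succ, stretch_mul, ih]

lemma coeff_one_add_X_pow' (k n : ℕ) :
    PowerSeries.coeff (R := ℤ) k ((1 + X) ^ n) = (n.choose k : ℤ) := by
  have h2 : (((1 + Polynomial.X : Polynomial ℤ) ^ n : Polynomial ℤ) : PowerSeries ℤ) =
      (1 + X) ^ n := by
    push_cast
    rfl
  rw [← h2, Polynomial.coeff_coe, Polynomial.coeff_one_add_X_pow]

end ChooseAux

theorem choose_add_choose_eq_sum_even_part (m r : ℕ) (hm : 2 ≤ m) (hr : 2 ≤ r)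
    (hre : Even r) :
    Nat.choose (r + m - 2) (m - 2) + Nat.choose (r - 1 + m - 2) (m - 2) =
      ∑ l ∈ Finset.range (r / 2 + 1),
        Nat.choose m (2 * l) * Nat.choose (r / 2 - l + m - 2) (m - 2) := by
  obtain ⟨d, rfl⟩ : ∃ d, m = d + 2 := ⟨m - 2, by omega⟩
  obtain ⟨s, hs⟩ : ∃ s, r = 2 * s := by obtain ⟨t, ht⟩ := hre; exact ⟨t, by omega⟩
  subst hs
  have hs1 : 1 ≤ s := by omega
  set U : PowerSeries ℤ := (PowerSeries.invOneSubPow ℤ (d + 1)).val with hU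
  have hUinv : U * (1 - X) ^ (d + 1) = 1 := by
    rw [hU, ← PowerSeries.invOneSubPow_inv_eq_one_sub_pow]
    exact (PowerSeries.invOneSubPow ℤ (d + 1)).val_inv
  have hUcoeff : ∀ n, PowerSeries.coeff (R := ℤ) n U = ((d + n).choose d : ℤ) := by
    intro n
    rw [hU, PowerSeries.invOneSubPow_val_succ_eq_mk_add_choose, PowerSeries.coeff_mk]
  have hVinv : ((1 - X) * (1 + X)) ^ (d + 1) * stretch U = 1 := by
    have h1 : ((1 - X) * (1 + X) : PowerSeries ℤ) = 1 - X ^ 2 := by ring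
    rw [h1, ← stretch_one_sub_X, ← stretch_pow, ← stretch_mul]
    rw [show ((1 - X) ^ (d + 1) * U : PowerSeries ℤ) = 1 by rw [mul_comm]; exact hUinv]
    exact stretch_one
  have key : (1 + X) * U = (1 + X) ^ (d + 2) * stretch U := by
    calc (1 + X) * U = ((1 + X) * U) * (((1 - X) * (1 + X)) ^ (d + 1) * stretch U) := by
          rw [hVinv, mul_one]
      _ = ((1 + X) ^ (d + 2) * stretch U) * (U * (1 - X) ^ (d + 1)) := by
          rw [mul_pow]; ring
      _ = (1 + X) ^ (d + 2) * stretch U := by rw [hUinv, mul_one]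
  have hcoeff := congrArg (PowerSeries.coeff (R := ℤ) (2 * s)) key
  obtain ⟨t, rfl⟩ : ∃ t, s = t + 1 := ⟨s - 1, by omega⟩
  have hL : PowerSeries.coeff (R := ℤ) (2 * (t + 1)) ((1 + X) * U) =
      ((d + (2 * t + 1 + 1)).choose d : ℤ) + ((d + (2 * t + 1)).choose d : ℤ) := by
    have h1 : ((1 + X) * U : PowerSeries ℤ) = U + X * U := by ring
    rw [h1, map_add, show 2 * (t + 1) = (2 * t + 1) + 1 by ring,
      PowerSeries.coeff_succ_X_mul, hUcoeff, hUcoeff]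
  have hR : PowerSeries.coeff (R := ℤ) (2 * (t + 1)) ((1 + X) ^ (d + 2) * stretch U) =
      ∑ l ∈ Finset.range ((t + 1) + 1),
        ((d + 2).choose (2 * l) : ℤ) * ((d + ((t + 1) - l)).choose d : ℤ) := by
    rw [PowerSeries.coeff_mul, Finset.Nat.sum_antidiagonal_eq_sum_range_succ_mk]
    dsimp only
    rw [sum_range_even (t + 1) _ (by
      intro j hj hodd
      have hj' : j ≤ 2 * (t + 1) := by omega
      have hodd2 : Odd (2 * (t + 1) - j) := Nat.Even.sub_odd hj' ⟨t + 1, by ring⟩ hodd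
      rw [coeff_stretch, if_neg (Nat.not_even_iff_odd.mpr hodd2), mul_zero])]
    apply Finset.sum_congr rfl
    intro l hl
    have hl' : l ≤ t + 1 := by simpa [Nat.lt_succ_iff] using hl
    have hev : Even (2 * (t + 1) - 2 * l) := ⟨(t + 1) - l, by omega⟩
    rw [coeff_one_add_X_pow', coeff_stretch, if_pos hev,
      show (2 * (t + 1) - 2 * l) / 2 = t + 1 - l by omega, hUcoeff]
  rw [hL, hR] at hcoeff
  have hnat : (d + (2 * t + 1 + 1)).choose d + (d + (2 * t + 1)).choose d =
      ∑ l ∈ Finset.range ((t + 1) + 1),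
        (d + 2).choose (2 * l) * (d + ((t + 1) - l)).choose d := by
    have hgoal : ((d + (2 * t + 1 + 1)).choose d : ℤ) + ((d + (2 * t + 1)).choose d : ℤ) =
        (((∑ l ∈ Finset.range ((t + 1) + 1),
          (d + 2).choose (2 * l) * (d + ((t + 1) - l)).choose d : ℕ)) : ℤ) := by
      rw [hcoeff]
      push_cast
      rfl
    exact_mod_cast hgoal
  have e1 : 2 * (t + 1) + (d + 2) - 2 = d + (2 * t + 1 + 1) := by omega
  have e2 : 2 * (t + 1) - 1 + (d + 2) - 2 = d + (2 * t + 1) := by omega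
  have e3 : 2 * (t + 1) / 2 = t + 1 := by omega
  rw [e1, e2, e3, Nat.add_sub_cancel, hnat]
  apply Finset.sum_congr rfl
  intro l hl
  have hl' : l ≤ t + 1 := by simpa [Nat.lt_succ_iff] using hl
  have e4 : t + 1 - l + (d + 2) - 2 = d + (t + 1 - l) := by omega
  rw [e4]
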